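/- Fix η > 0, σ² > 0, α > 2, D > 0, and K a positive natural number. Let g be a random variable with CDF Φ_G(g) = 1 - g^{-2/α}/D² on [D^{-α}, ∞), arising as g = d^{-α} where d has CDF (d/D)² on [0,D]. Then E[1 - exp(-η·σ²·L/g)/(1+η)^{L-1}] = 1 - (2/(α·D²·(1+η)^{L-1})) · γ(2/α, η·σ²·L·D^α)/(η·σ²·L)^{2/α}, where γ is the lower incomplete gamma function. -/

import Mathlib

open MeasureTheory Set

lemma measurable_rpow_const_aux {q : ℝ} (hq : q ≠ 0) :
    Measurable fun t : ℝ => t ^ q := by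
  classical
  have heq : (fun t : ℝ => t ^ q) = ({(0:ℝ)} : Set ℝ).piecewise (fun _ => (0:ℝ))
      (fun t => Real.exp (Real.log t * q) *
        (Iio (0:ℝ)).piecewise (fun _ => Real.cos (q * Real.pi)) (fun _ => 1) t) := by
    funext t
    rcases lt_trichotomy t 0 with ht | ht | ht
    · rw [Set.piecewise_eq_of_notMem _ _ _ (by simp [ht.ne] : t ∉ ({(0:ℝ)} : Set ℝ)),
        Set.piecewise_eq_of_mem _ _ _ (by simpa using ht), Real.rpow_def_of_neg ht]
    · subst ht
      rw [Set.piecewise_eq_of_mem _ _ _ (Set.mem_singleton _), Real.zero_rpow hq]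
    · rw [Set.piecewise_eq_of_notMem _ _ _ (by simp [ht.ne'] : t ∉ ({(0:ℝ)} : Set ℝ)),
        Set.piecewise_eq_of_notMem _ _ _ (by simpa using ht.le), Real.rpow_def_of_pos ht]
      ring
  rw [heq]
  apply Measurable.piecewise (measurableSet_singleton 0) measurable_const
  exact ((Real.measurable_log.mul_const q).exp).mul
    (Measurable.piecewise measurableSet_Iio measurable_const measurable_const)

/-- Lemma 1 (single-cell heterogeneous users): if the path-loss random variable `X` has CDF
`Φ_G(x) = 1 - x^(-2/α)/D²` for `x ≥ D^(-α)` (and `0` below), then the expected conditional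
outage probability equals
`1 - (2/(α D² (1+η)^(L-1))) γ(2/α, η σ² L D^α) / (η σ² L)^(2/α)`. -/
theorem stmt_7 {Ω : Type*} [MeasurableSpace Ω] (μ : Measure Ω) [IsProbabilityMeasure μ]
    (η σ2 α D L : ℝ) (K : ℕ) (hK : 0 < K)
    (hη : 0 < η) (hσ : 0 < σ2) (hα : 2 < α) (hD : 0 < D) (hL : 0 < L)
    (X : Ω → ℝ) (hX : Measurable X)
    (hcdf : ∀ x : ℝ, (μ {ω | X ω ≤ x}).toReal =
      if x < D ^ (-α) then 0 else 1 - x ^ (-(2 / α)) / D ^ 2) :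
    (∫ ω, (1 - Real.exp (-(η * σ2 * L) / X ω) / (1 + η) ^ (L - 1)) ∂μ) =
      1 - (2 / (α * D ^ 2 * (1 + η) ^ (L - 1))) *
        (∫ u in (0 : ℝ)..(η * σ2 * L * D ^ α), u ^ (2 / α - 1) * Real.exp (-u)) /
          (η * σ2 * L) ^ (2 / α) := by
  have hα0 : (0:ℝ) < α := by linarith
  set p : ℝ := 2 / α with hp_def
  have hp0 : 0 < p := by positivity
  have hp1 : p < 1 := by rw [hp_def, div_lt_one hα0]; linarith
  set c : ℝ := η * σ2 * L with hc_def
  have hc0 : 0 < c := by rw [hc_def]; positivity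
  set a : ℝ := D ^ (-α) with ha_def
  have ha0 : 0 < a := Real.rpow_pos_of_pos hD _
  set B : ℝ := (1 + η) ^ (L - 1) with hB_def
  have hB0 : 0 < B := Real.rpow_pos_of_pos (by linarith) _
  set T : ℝ := c * D ^ α with hT_def
  have hDα : (0:ℝ) < D ^ α := Real.rpow_pos_of_pos hD _
  have hT0 : 0 < T := by rw [hT_def]; exact mul_pos hc0 hDα
  have haD : a ^ (-p) = D ^ 2 := by
    rw [ha_def, ← Real.rpow_natCast D 2, ← Real.rpow_mul hD.le]
    congr 1
    field_simp [hp_def]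
    rw [hp_def]; push_cast; field_simp [hα0.ne']
  have hD2 : (0:ℝ) < D ^ 2 := by positivity
  have hca : c / a = T := by
    rw [hT_def, ha_def, Real.rpow_neg hD.le]
    field_simp
  -- the density
  set ψ : ℝ → ℝ := fun t => p / D ^ 2 * t ^ (-p - 1) with hψ_def
  set φ : ℝ → ℝ := (Ici a).indicator ψ with hφ_def
  have hψ_meas : Measurable ψ :=
    (measurable_rpow_const_aux (by linarith : -p - 1 < 0).ne).const_mul _
  have hφ_meas : Measurable φ := hψ_meas.indicator measurableSet_Ici
  have hφ_nonneg : ∀ x, 0 ≤ φ x := by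
    intro x
    rw [hφ_def]
    apply Set.indicator_nonneg
    intro t ht
    have ht0 : 0 < t := lt_of_lt_of_le ha0 ht
    have : (0:ℝ) < t ^ (-p - 1) := Real.rpow_pos_of_pos ht0 _
    positivity
  have hψ_int : IntegrableOn ψ (Ioi a) := by
    exact (integrableOn_Ioi_rpow_of_lt (by linarith) ha0).const_mul _
  have hψ_int' : IntegrableOn ψ (Ici a) :=
    (integrableOn_Ici_iff_integrableOn_Ioi (by simp)).2 hψ_int
  have hφ_int : Integrable φ := by
    rw [hφ_def]
    exact (integrable_indicator_iff measurableSet_Ici).2 hψ_int'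
  have he_meas : Measurable fun x : ℝ => Real.exp (-c / x) :=
    Real.measurable_exp.comp (measurable_const.div measurable_id)
  have hG : Measurable fun x : ℝ => 1 - Real.exp (-c / x) / B :=
    measurable_const.sub (he_meas.div_const B)
  -- the measures
  set ν : Measure ℝ := μ.map X with hν_def
  haveI hνP : IsProbabilityMeasure ν := Measure.isProbabilityMeasure_map hX.aemeasurable
  set νd : Measure ℝ := volume.withDensity (fun t => ENNReal.ofReal (φ t)) with hνd_def
  -- FTC on intervals
  have hFTC : ∀ x : ℝ, a ≤ x → ∫ t in a..x, ψ t = 1 - x ^ (-p) / D ^ 2 := by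
    intro x hx
    have huIcc : uIcc a x = Icc a x := uIcc_of_le hx
    have hderiv : ∀ t ∈ uIcc a x,
        HasDerivAt (fun t : ℝ => -(t ^ (-p)) / D ^ 2) (ψ t) t := by
      intro t ht
      rw [huIcc] at ht
      have ht0 : 0 < t := lt_of_lt_of_le ha0 ht.1
      have h1 : HasDerivAt (fun t : ℝ => t ^ (-p)) (-p * t ^ (-p - 1)) t :=
        Real.hasDerivAt_rpow_const (Or.inl ht0.ne')
      have h2 := (h1.neg).div_const (D ^ 2)
      refine h2.congr_deriv ?_
      rw [hψ_def]
      field_simp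
    have hcont : ContinuousOn ψ (uIcc a x) := by
      rw [huIcc]
      apply ContinuousOn.mul continuousOn_const
      apply ContinuousOn.rpow_const continuousOn_id
      intro t ht
      exact Or.inl (lt_of_lt_of_le ha0 ht.1).ne'
    rw [intervalIntegral.integral_eq_sub_of_hasDerivAt hderiv
      (hcont.intervalIntegrable)]
    rw [← haD]
    field_simp
    ring
  -- CDFs agree
  have h_iic : ∀ x : ℝ, ν (Iic x)
      = ENNReal.ofReal (if x < a then 0 else 1 - x ^ (-p) / D ^ 2) := by
    intro x
    have h1 : ν (Iic x) = μ {ω | X ω ≤ x} := by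
      rw [hν_def, Measure.map_apply hX measurableSet_Iic]
      rfl
    rw [h1, ← hcdf x, ENNReal.ofReal_toReal (measure_ne_top μ _)]
  have h_iic' : ∀ x : ℝ, νd (Iic x)
      = ENNReal.ofReal (if x < a then 0 else 1 - x ^ (-p) / D ^ 2) := by
    intro x
    rw [hνd_def, withDensity_apply _ measurableSet_Iic]
    by_cases hx : x < a
    · rw [if_pos hx]
      have hz : ∀ᵐ t ∂volume, t ∈ Iic x → ENNReal.ofReal (φ t) = 0 := by
        refine ae_of_all _ fun t ht => ?_
        have : t ∉ Ici a := by simp only [mem_Ici, not_le]; exact lt_of_le_of_lt ht hx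
        rw [hφ_def, Set.indicator_of_notMem this]
        simp
      rw [setLIntegral_congr_fun_ae measurableSet_Iic hz]
      simp
    · push_neg at hx
      rw [if_neg (not_lt.2 hx)]
      rw [← ofReal_integral_eq_lintegral_ofReal hφ_int.integrableOn
        (ae_of_all _ hφ_nonneg)]
      congr 1
      rw [hφ_def, setIntegral_indicator measurableSet_Ici,
        Set.Iic_inter_Ici, integral_Icc_eq_integral_Ioc,
        ← intervalIntegral.integral_of_le hx]
      exact hFTC x hx
  have hνeq : ν = νd :=
    MeasureTheory.Measure.ext_of_Iic ν νd fun x => by rw [h_iic, h_iic']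
  -- total mass of density is 1
  have hφ_total : (∫ x, φ x) = 1 := by
    rw [hφ_def, integral_indicator measurableSet_Ici, integral_Ici_eq_integral_Ioi,
      hψ_def]
    simp only
    rw [MeasureTheory.integral_const_mul, integral_Ioi_rpow_of_lt (by linarith) ha0,
      show -p - 1 + 1 = -p by ring, haD]
    field_simp
  -- integrability of the exponential part
  have hφe_int : Integrable fun x => φ x * Real.exp (-c / x) := by
    refine hφ_int.mono ((hφ_meas.mul he_meas).aestronglyMeasurable)
      (ae_of_all _ fun x => ?_)
    rw [Real.norm_eq_abs, Real.norm_eq_abs, abs_mul, abs_of_nonneg (hφ_nonneg x),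
      abs_of_nonneg (Real.exp_pos _).le]
    by_cases hx : x ∈ Ici a
    · have hx0 : 0 < x := lt_of_lt_of_le ha0 hx
      have he1 : Real.exp (-c / x) ≤ 1 := by
        rw [Real.exp_le_one_iff]
        apply div_nonpos_of_nonpos_of_nonneg (by linarith) hx0.le
      nlinarith [hφ_nonneg x]
    · rw [hφ_def, Set.indicator_of_notMem hx]
      simp
  -- substitution u = c / t
  have himg : (fun t : ℝ => c / t) '' Ioi a = Ioo 0 T := by
    ext u
    constructor
    · rintro ⟨t, ht, rfl⟩
      have ht0 : 0 < t := ha0.trans ht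
      refine ⟨by positivity, ?_⟩
      rw [← hca]
      exact div_lt_div_of_pos_left hc0 ha0 ht
    · rintro ⟨hu0, huT⟩
      refine ⟨c / u, ?_, ?_⟩
      · rw [mem_Ioi, lt_div_iff₀ hu0]
        rw [← hca, lt_div_iff₀ ha0] at huT
        linarith [huT]
      · field_simp
  have hderiv : ∀ t ∈ Ioi a, HasDerivWithinAt (fun t : ℝ => c / t)
      (-(c / t ^ 2)) (Ioi a) t := by
    intro t ht
    have ht0 : 0 < t := ha0.trans ht
    have h1 : HasDerivAt (fun t : ℝ => c * t⁻¹) (c * (-(t ^ 2)⁻¹)) t :=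
      (hasDerivAt_inv ht0.ne').const_mul c
    have h2 : HasDerivAt (fun t : ℝ => c / t) (-(c / t ^ 2)) t := by
      have := h1.congr_deriv (show c * (-(t ^ 2)⁻¹) = -(c / t ^ 2) by ring)
      simpa only [div_eq_mul_inv] using this
    exact h2.hasDerivWithinAt
  have hinj : InjOn (fun t : ℝ => c / t) (Ioi a) := by
    intro t₁ h₁ t₂ h₂ h
    have h10 : (0:ℝ) < t₁ := ha0.trans h₁
    have h20 : (0:ℝ) < t₂ := ha0.trans h₂
    simp only at h
    field_simp at h
    exact h.symm
  have hsub : (∫ u in Ioo (0:ℝ) T, u ^ (p - 1) * Real.exp (-u))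
      = c ^ p * ∫ t in Ioi a, t ^ (-p - 1) * Real.exp (-c / t) := by
    rw [← himg, integral_image_eq_integral_abs_deriv_smul measurableSet_Ioi hderiv hinj
      (fun u => u ^ (p - 1) * Real.exp (-u)), ← MeasureTheory.integral_const_mul]
    apply setIntegral_congr_fun measurableSet_Ioi
    intro t ht
    have ht0 : 0 < t := ha0.trans ht
    have ht2 : (0:ℝ) < t ^ 2 := by positivity
    have htp : (0:ℝ) < t ^ (p - 1) := Real.rpow_pos_of_pos ht0 _
    simp only [smul_eq_mul]
    rw [abs_neg, abs_of_pos (by positivity : (0:ℝ) < c / t ^ 2)]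
    rw [Real.div_rpow hc0.le ht0.le]
    have h1 : t ^ (-p - 1) * (t ^ (p - 1) * t ^ 2) = 1 := by
      rw [← Real.rpow_natCast t 2, ← Real.rpow_add ht0, ← Real.rpow_add ht0,
        show -p - 1 + (p - 1 + ((2:ℕ):ℝ)) = 0 by push_cast; ring, Real.rpow_zero]
    have h2 : c ^ (p - 1) * c = c ^ p := by
      rw [← Real.rpow_add_one hc0.ne' (p - 1), show p - 1 + 1 = p by ring]
    have h3 : t ^ (-p - 1) = (t ^ (p - 1) * t ^ 2)⁻¹ :=
      eq_inv_of_mul_eq_one_left h1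
    rw [← h2, h3, neg_div t c]
    field_simp
  have hcp : (0:ℝ) < c ^ p := Real.rpow_pos_of_pos hc0 _
  have hI : (∫ u in (0:ℝ)..T, u ^ (p - 1) * Real.exp (-u))
      = ∫ u in Ioo (0:ℝ) T, u ^ (p - 1) * Real.exp (-u) := by
    rw [intervalIntegral.integral_of_le hT0.le, integral_Ioc_eq_integral_Ioo]
  have hJ : (∫ x, φ x * Real.exp (-c / x))
      = p / D ^ 2 * ((∫ u in (0:ℝ)..T, u ^ (p - 1) * Real.exp (-u)) / c ^ p) := by
    have hpt : ∀ x, φ x * Real.exp (-c / x)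
        = (Ici a).indicator (fun t => ψ t * Real.exp (-c / t)) x := by
      intro x
      rw [hφ_def]
      by_cases hx : x ∈ Ici a
      · rw [Set.indicator_of_mem hx, Set.indicator_of_mem hx]
      · rw [Set.indicator_of_notMem hx, Set.indicator_of_notMem hx, zero_mul]
    simp only [hpt]
    rw [integral_indicator measurableSet_Ici, integral_Ici_eq_integral_Ioi, hψ_def]
    simp only [mul_assoc]
    rw [MeasureTheory.integral_const_mul]
    congr 1
    rw [hI, hsub, mul_div_cancel_left₀ _ hcp.ne']
  -- put everything together
  have h0 : (∫ ω, (1 - Real.exp (-c / X ω) / B) ∂μ)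
      = ∫ x, (1 - Real.exp (-c / x) / B) ∂ν := by
    rw [hν_def, integral_map hX.aemeasurable hG.aestronglyMeasurable]
  have hνd' : νd = volume.withDensity
      (fun t => (((fun x => (φ x).toNNReal) t : NNReal) : ENNReal)) := rfl
  have h1 : (∫ x, (1 - Real.exp (-c / x) / B) ∂νd)
      = ∫ x, φ x * (1 - Real.exp (-c / x) / B) := by
    rw [hνd', integral_withDensity_eq_integral_smul hφ_meas.real_toNNReal]
    apply integral_congr_ae (ae_of_all _ fun x => ?_)
    rw [NNReal.smul_def, smul_eq_mul, Real.coe_toNNReal _ (hφ_nonneg x)]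
  have h2 : (∫ x, φ x * (1 - Real.exp (-c / x) / B))
      = (∫ x, φ x) - (∫ x, φ x * Real.exp (-c / x)) / B := by
    have : ∀ x, φ x * (1 - Real.exp (-c / x) / B)
        = φ x - (φ x * Real.exp (-c / x)) / B := by
      intro x; field_simp
    simp only [this]
    rw [integral_sub hφ_int (hφe_int.div_const B), MeasureTheory.integral_div]
  have hneg : ∀ ω, -c / X ω = -(c / X ω) := fun ω => neg_div _ _
  rw [show (∫ ω, (1 - Real.exp (-c / X ω) / B) ∂μ)
      = ∫ x, (1 - Real.exp (-c / x) / B) ∂νd from by rw [h0, hνeq]]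
  rw [h1, h2, hφ_total, hJ]
  rw [hp_def]
  have hα' : α ≠ 0 := hα0.ne'
  have hcp' : c ^ (2 / α) ≠ 0 := by rw [hp_def] at hcp; exact hcp.ne'
  field_simp
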